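/- Consider throwing $|W|$ worker-balls and $|T|$ task-balls independently and uniformly at random into $k$ bins, with $k \le |W| = |T| \le 1.1k$, and let $X$ be the number of bins receiving at least one worker-ball and at least one task-ball. Then $\Pr[X < k/8] \le e^{-\Omega(k)}$; consequently, the $k$-bin hash with random hash functions leaves at most $1.1k - k/8 \le k$ workers unmatched except with probability $e^{-\Omega(k)}$. -/

import Mathlib

open Finset

/-- Number of bins missed by `f`. -/
def emptyCount {m k : ℕ} (f : Fin m → Fin k) : ℕ :=
  (Finset.univ.filter (fun b : Fin k => ∀ i, f i ≠ b)).card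

lemma emptyCount_le {m k : ℕ} (f : Fin m → Fin k) : emptyCount f ≤ k := by
  classical
  calc emptyCount f ≤ (Finset.univ : Finset (Fin k)).card := Finset.card_filter_le _ _
  _ = k := by simp

/-- Double counting: sum over all placements of `choose (emptyCount f) s`. -/
lemma sum_choose_empty (m k s : ℕ) :
    ∑ f : Fin m → Fin k, (emptyCount f).choose s = k.choose s * (k - s) ^ m := by
  classical
  have h1 : ∀ f : Fin m → Fin k,
      (emptyCount f).choose s
        = ((Finset.univ.powersetCard s).filter
            (fun S : Finset (Fin k) => S ⊆ Finset.univ.filter (fun b => ∀ i, f i ≠ b))).card := by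
    intro f
    rw [show ((Finset.univ.powersetCard s).filter
        (fun S : Finset (Fin k) => S ⊆ Finset.univ.filter (fun b => ∀ i, f i ≠ b)))
      = (Finset.univ.filter (fun b : Fin k => ∀ i, f i ≠ b)).powersetCard s by
        ext T
        simp [Finset.mem_powersetCard, Finset.mem_filter, and_comm]]
    rw [Finset.card_powersetCard]
    rfl
  simp only [h1, Finset.card_filter]
  rw [Finset.sum_comm]
  have h2 : ∀ S : Finset (Fin k), S ∈ Finset.univ.powersetCard s →
      (∑ f : Fin m → Fin k,
        if S ⊆ Finset.univ.filter (fun b => ∀ i, f i ≠ b) then 1 else 0) = (k - s) ^ m := by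
    intro S hS
    rw [Finset.mem_powersetCard] at hS
    rw [← Finset.card_filter]
    have : (Finset.univ.filter
        (fun f : Fin m → Fin k => S ⊆ Finset.univ.filter (fun b => ∀ i, f i ≠ b)))
        = Fintype.piFinset (fun _ : Fin m => Sᶜ) := by
      ext f
      simp only [Finset.mem_filter, Finset.mem_univ, true_and, Fintype.mem_piFinset,
        Finset.mem_compl, Finset.subset_iff]
      constructor
      · intro h i hi
        exact (h hi) i rfl
      · intro h b hb
        exact fun i hib => h i (hib ▸ hb)
    rw [this, Fintype.card_piFinset]
    simp [Finset.card_compl, hS.2]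
  rw [Finset.sum_congr rfl h2]
  rw [Finset.sum_const, Finset.card_powersetCard]
  simp [mul_comm]

lemma sum_pow_empty (m k : ℕ) (hk : 0 < k) (hkm : k ≤ m) :
    ∑ f : Fin m → Fin k, ((4:ℝ)/3) ^ emptyCount f
      ≤ (k:ℝ)^m * (Real.exp (-1)/3 + 1)^k := by
  classical
  have hkR : (0:ℝ) < k := by exact_mod_cast hk
  have hexp : ∀ f : Fin m → Fin k, ((4:ℝ)/3) ^ emptyCount f
      = ∑ s ∈ Finset.range (k+1), (1/3:ℝ)^s * ((emptyCount f).choose s : ℝ) := by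
    intro f
    have h43 : ((4:ℝ)/3) = (1/3 + 1) := by norm_num
    rw [h43, add_pow]
    simp only [one_pow, mul_one]
    apply Finset.sum_subset
    · intro x hx
      rw [Finset.mem_range] at hx ⊢
      have := emptyCount_le f
      omega
    · intro x _ hx
      rw [Finset.mem_range, not_lt] at hx
      rw [Nat.choose_eq_zero_of_lt (by omega)]
      simp
  simp only [hexp]
  rw [Finset.sum_comm]
  have key : ∀ s ∈ Finset.range (k+1),
      (∑ f : Fin m → Fin k, (1/3:ℝ)^s * ((emptyCount f).choose s : ℝ))
        ≤ (k:ℝ)^m * ((k.choose s : ℝ) * (Real.exp (-1)/3)^s) := by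
    intro s hs
    rw [Finset.mem_range] at hs
    have hsk : s ≤ k := by omega
    rw [← Finset.mul_sum, ← Nat.cast_sum, sum_choose_empty]
    have hcast : (((k - s : ℕ)) : ℝ) = (k:ℝ) - s := by
      rw [Nat.cast_sub hsk]
    have hsR : (0:ℝ) ≤ (s:ℝ) := by positivity
    have hskR : (s:ℝ) ≤ (k:ℝ) := by exact_mod_cast hsk
    have hkmR : (k:ℝ) ≤ (m:ℝ) := by exact_mod_cast hkm
    have h1 : (k:ℝ) - s ≤ (k:ℝ) * Real.exp (-(s:ℝ)/k) := by
      have h2 := Real.add_one_le_exp (-(s:ℝ)/k)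
      have h3 : (-(s:ℝ)/k + 1) * k ≤ Real.exp (-(s:ℝ)/k) * k := by
        apply mul_le_mul_of_nonneg_right h2 (le_of_lt hkR)
      calc (k:ℝ) - s = (-(s:ℝ)/k + 1) * k := by field_simp; ring
        _ ≤ Real.exp (-(s:ℝ)/k) * k := h3
        _ = (k:ℝ) * Real.exp (-(s:ℝ)/k) := mul_comm _ _
    have hbound : ((k:ℝ) - s)^m ≤ (k:ℝ)^m * Real.exp (-1)^s := by
      calc ((k:ℝ)-s)^m ≤ ((k:ℝ) * Real.exp (-(s:ℝ)/k))^m :=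
            pow_le_pow_left₀ (by linarith) h1 m
        _ = (k:ℝ)^m * Real.exp (-(s:ℝ)/k)^m := mul_pow _ _ _
        _ ≤ (k:ℝ)^m * Real.exp (-1)^s := by
            apply mul_le_mul_of_nonneg_left _ (by positivity)
            rw [← Real.exp_nat_mul, ← Real.exp_nat_mul]
            apply Real.exp_le_exp.mpr
            have e1 : (m:ℝ) * (-(s:ℝ)/k) = -(((m:ℝ)*s)/k) := by ring
            rw [e1]
            have e2 : (s:ℝ) ≤ ((m:ℝ)*s)/k := by
              rw [le_div_iff₀ hkR]
              nlinarith
            linarith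
    calc (1/3:ℝ)^s * ((k.choose s * (k-s)^m : ℕ) : ℝ)
        = (k.choose s : ℝ) * (1/3:ℝ)^s * (((k - s:ℕ)):ℝ)^m := by push_cast; ring
      _ = (k.choose s : ℝ) * (1/3:ℝ)^s * ((k:ℝ) - s)^m := by rw [hcast]
      _ ≤ (k.choose s : ℝ) * (1/3:ℝ)^s * ((k:ℝ)^m * Real.exp (-1)^s) := by
          apply mul_le_mul_of_nonneg_left hbound (by positivity)
      _ = (k:ℝ)^m * ((k.choose s : ℝ) * (Real.exp (-1)/3)^s) := by
          simp only [div_pow, one_pow]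
          ring
  calc (∑ s ∈ Finset.range (k+1), ∑ f : Fin m → Fin k,
          (1/3:ℝ)^s * ((emptyCount f).choose s : ℝ))
      ≤ ∑ s ∈ Finset.range (k+1), (k:ℝ)^m * ((k.choose s : ℝ) * (Real.exp (-1)/3)^s) :=
        Finset.sum_le_sum key
    _ = (k:ℝ)^m * (Real.exp (-1)/3 + 1)^k := by
        rw [← Finset.mul_sum, add_pow]
        simp only [one_pow, mul_one]
        congr 1
        apply Finset.sum_congr rfl
        intro s _
        ring

lemma exp_inv_small : Real.exp (-1) ≤ 0.3678794412 := by
  have h := Real.exp_one_gt_d9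
  rw [Real.exp_neg]
  rw [inv_le_comm₀ (by positivity) (by norm_num)]
  linarith

lemma exp_small : Real.exp (1/200) ≤ 200/199 := by
  have h := Real.add_one_le_exp (-(1/200):ℝ)
  rw [Real.exp_neg] at h
  have hp := Real.exp_pos (1/200:ℝ)
  have h2 : (199/200:ℝ) ≤ (Real.exp (1/200))⁻¹ := by linarith
  have h3 := mul_inv_cancel₀ (ne_of_gt hp)
  nlinarith

lemma numeric_core :
    ((1 + Real.exp (-1)/3) * Real.exp (1/200))^16 ≤ ((4:ℝ)/3)^7 := by
  have e1 := exp_inv_small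
  have e2 := exp_small
  have hp1 : (0:ℝ) ≤ 1 + Real.exp (-1)/3 := by positivity
  have hp2 : (0:ℝ) ≤ Real.exp (1/200) := le_of_lt (Real.exp_pos _)
  have h1 : (1 + Real.exp (-1)/3) * Real.exp (1/200) ≤ (1 + 0.3678794412/3) * (200/199) := by
    apply mul_le_mul (by linarith) e2 hp2 (by norm_num)
  calc ((1 + Real.exp (-1)/3) * Real.exp (1/200))^16
      ≤ ((1 + (0.3678794412:ℝ)/3) * (200/199))^16 := by
        apply pow_le_pow_left₀ (by positivity) h1
    _ ≤ ((4:ℝ)/3)^7 := by norm_num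

lemma tail_bound (m k : ℕ) (hk : 0 < k) (hkm : k ≤ m) :
    ((Finset.univ.filter (fun f : Fin m → Fin k => 7*k ≤ 16 * emptyCount f)).card : ℝ)
      ≤ (k:ℝ)^m * Real.exp (-(1/200) * k) := by
  classical
  set r := (7*k+15)/16 with hr
  have hrk : 7*k ≤ 16*r := by omega
  set Bad := Finset.univ.filter (fun f : Fin m → Fin k => 7*k ≤ 16 * emptyCount f) with hBad
  have h1 : ∀ f ∈ Bad, ((4:ℝ)/3)^r ≤ ((4:ℝ)/3)^(emptyCount f) := by
    intro f hf
    rw [hBad, Finset.mem_filter] at hf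
    apply pow_le_pow_right₀ (by norm_num)
    omega
  have h2 : (Bad.card : ℝ) * ((4:ℝ)/3)^r ≤ ∑ f ∈ Bad, ((4:ℝ)/3)^(emptyCount f) := by
    have := Finset.card_nsmul_le_sum Bad (fun f => ((4:ℝ)/3)^(emptyCount f)) (((4:ℝ)/3)^r) h1
    rwa [nsmul_eq_mul] at this
  have h3 : ∑ f ∈ Bad, ((4:ℝ)/3)^(emptyCount f) ≤ ∑ f : Fin m → Fin k, ((4:ℝ)/3)^(emptyCount f) :=
    Finset.sum_le_sum_of_subset_of_nonneg (Finset.subset_univ _) (fun _ _ _ => by positivity)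
  have h4 := sum_pow_empty m k hk hkm
  -- key exponential inequality
  have key : ((1 + Real.exp (-1)/3) * Real.exp (1/200))^k ≤ ((4:ℝ)/3)^r := by
    have hA : (0:ℝ) ≤ (1 + Real.exp (-1)/3) * Real.exp (1/200) := by positivity
    have hB : (0:ℝ) ≤ ((4:ℝ)/3)^r := by positivity
    rw [← pow_le_pow_iff_left₀ (pow_nonneg hA k) hB (show (16:ℕ) ≠ 0 by norm_num)]
    calc (((1 + Real.exp (-1)/3) * Real.exp (1/200))^k)^16
        = (((1 + Real.exp (-1)/3) * Real.exp (1/200))^16)^k := by rw [← pow_mul, ← pow_mul, Nat.mul_comm]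
      _ ≤ (((4:ℝ)/3)^7)^k := pow_le_pow_left₀ (by positivity) numeric_core k
      _ = ((4:ℝ)/3)^(7*k) := by rw [← pow_mul]
      _ ≤ ((4:ℝ)/3)^(16*r) := pow_le_pow_right₀ (by norm_num) hrk
      _ = (((4:ℝ)/3)^r)^16 := by rw [← pow_mul, Nat.mul_comm]
  have key2 : (Real.exp (-1)/3 + 1)^k ≤ Real.exp (-(1/200) * k) * ((4:ℝ)/3)^r := by
    have e1 : ((1 + Real.exp (-1)/3))^k * (Real.exp (1/200))^k ≤ ((4:ℝ)/3)^r := by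
      rw [← mul_pow]; exact key
    have e2 : (Real.exp (1/200))^k = Real.exp ((k:ℝ)/200) := by
      rw [← Real.exp_nat_mul]
      congr 1
      ring
    have e3 : Real.exp (-(1/200) * k) * Real.exp ((k:ℝ)/200) = 1 := by
      rw [← Real.exp_add]
      rw [show -(1/200 : ℝ) * k + (k:ℝ)/200 = 0 by ring, Real.exp_zero]
    rw [e2] at e1
    rw [add_comm]
    calc (1 + Real.exp (-1)/3)^k
        = ((1 + Real.exp (-1)/3)^k * Real.exp ((k:ℝ)/200)) * Real.exp (-(1/200) * k) := by
          rw [mul_assoc, mul_comm (Real.exp ((k:ℝ)/200)), e3, mul_one]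
      _ ≤ ((4:ℝ)/3)^r * Real.exp (-(1/200) * k) :=
          mul_le_mul_of_nonneg_right e1 (Real.exp_pos _).le
      _ = Real.exp (-(1/200) * k) * ((4:ℝ)/3)^r := mul_comm _ _
  have hBpos : (0:ℝ) < ((4:ℝ)/3)^r := by positivity
  rw [← mul_le_mul_iff_of_pos_right hBpos]
  calc (Bad.card : ℝ) * ((4:ℝ)/3)^r ≤ (k:ℝ)^m * (Real.exp (-1)/3 + 1)^k := le_trans h2 (le_trans h3 h4)
    _ ≤ (k:ℝ)^m * (Real.exp (-(1/200) * k) * ((4:ℝ)/3)^r) := by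
        apply mul_le_mul_of_nonneg_left key2 (by positivity)
    _ = (k:ℝ)^m * Real.exp (-(1/200) * k) * ((4:ℝ)/3)^r := by ring

/-- The number of active bins: bins receiving at least one worker-ball and at least one
task-ball under the placements `fg.1` (workers) and `fg.2` (tasks). -/
def activeBins {m k : ℕ} (fg : (Fin m → Fin k) × (Fin m → Fin k)) : ℕ :=
  (Finset.univ.filter (fun b : Fin k => (∃ i, fg.1 i = b) ∧ (∃ j, fg.2 j = b))).card

/-- with `m` worker-balls and `m` task-balls thrown uniformly and independently
into `k` bins, `k ≤ m ≤ 1.1k`, the number `X` of active bins satisfies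
`Pr[X < k/8] ≤ e^{-Ω(k)}`; consequently the `k`-bin hash (which matches one worker per
active bin) leaves more than `k` of the `m` workers unmatched with probability at most
`e^{-Ω(k)}`. -/
theorem active_bins_concentration :
    ∃ C c : ℝ, 0 < c ∧
      ∀ k m : ℕ, 0 < k → k ≤ m → (m : ℝ) ≤ 1.1 * k →
        (((Finset.univ.filter (fun fg : (Fin m → Fin k) × (Fin m → Fin k) =>
              (activeBins fg : ℝ) < k / 8)).card : ℝ) ≤
          C * Real.exp (-c * k) * (Fintype.card ((Fin m → Fin k) × (Fin m → Fin k)) : ℝ)) ∧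
        (((Finset.univ.filter (fun fg : (Fin m → Fin k) × (Fin m → Fin k) =>
              k < m - activeBins fg)).card : ℝ) ≤
          C * Real.exp (-c * k) * (Fintype.card ((Fin m → Fin k) × (Fin m → Fin k)) : ℝ)) := by
  classical
  refine ⟨2, 1/200, by norm_num, ?_⟩
  intro k m hk hkm hm11
  have hkR : (0:ℝ) < k := by exact_mod_cast hk
  -- the two bad sets
  set BadF := Finset.univ.filter (fun f : Fin m → Fin k => 7*k ≤ 16 * emptyCount f) with hBadF
  -- bound on the first event
  have main1 : ((Finset.univ.filter (fun fg : (Fin m → Fin k) × (Fin m → Fin k) =>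
        (activeBins fg : ℝ) < k / 8)).card : ℝ) ≤
      2 * Real.exp (-(1/200) * k) * (Fintype.card ((Fin m → Fin k) × (Fin m → Fin k)) : ℝ) := by
    have hsub : (Finset.univ.filter (fun fg : (Fin m → Fin k) × (Fin m → Fin k) =>
          (activeBins fg : ℝ) < k / 8)) ⊆
        (Finset.univ.filter (fun fg : (Fin m → Fin k) × (Fin m → Fin k) =>
            7*k ≤ 16 * emptyCount fg.1)) ∪
        (Finset.univ.filter (fun fg : (Fin m → Fin k) × (Fin m → Fin k) =>
            7*k ≤ 16 * emptyCount fg.2)) := by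
      intro fg hfg
      rw [Finset.mem_filter] at hfg
      have hX : 8 * activeBins fg < k := by
        have : ((8 * activeBins fg : ℕ) : ℝ) < (k:ℝ) := by push_cast; nlinarith [hfg.2]
        exact_mod_cast this
      have hpart : activeBins fg + (Finset.univ.filter
          (fun b : Fin k => ¬((∃ i, fg.1 i = b) ∧ (∃ j, fg.2 j = b)))).card = k := by
        rw [activeBins, Finset.card_filter_add_card_filter_not, Finset.card_univ,
          Fintype.card_fin]
      have hsub2 : (Finset.univ.filter
            (fun b : Fin k => ¬((∃ i, fg.1 i = b) ∧ (∃ j, fg.2 j = b)))) ⊆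
          (Finset.univ.filter (fun b : Fin k => ∀ i, fg.1 i ≠ b)) ∪
          (Finset.univ.filter (fun b : Fin k => ∀ j, fg.2 j ≠ b)) := by
        intro b hb
        rw [Finset.mem_filter] at hb
        rw [Finset.mem_union, Finset.mem_filter, Finset.mem_filter]
        push_neg at hb
        rcases Classical.em (∃ i, fg.1 i = b) with h | h
        · exact Or.inr ⟨Finset.mem_univ b, hb.2 h⟩
        · exact Or.inl ⟨Finset.mem_univ b, not_exists.mp h⟩
      have hcard : (Finset.univ.filter
            (fun b : Fin k => ¬((∃ i, fg.1 i = b) ∧ (∃ j, fg.2 j = b)))).card ≤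
          emptyCount fg.1 + emptyCount fg.2 :=
        le_trans (Finset.card_le_card hsub2) (Finset.card_union_le _ _)
      rw [Finset.mem_union, Finset.mem_filter, Finset.mem_filter]
      simp only [Finset.mem_univ, true_and]
      omega
    have hprod1 : (Finset.univ.filter (fun fg : (Fin m → Fin k) × (Fin m → Fin k) =>
          7*k ≤ 16 * emptyCount fg.1)).card = BadF.card * k^m := by
      have : (Finset.univ.filter (fun fg : (Fin m → Fin k) × (Fin m → Fin k) =>
            7*k ≤ 16 * emptyCount fg.1)) = BadF ×ˢ Finset.univ := by
        ext fg
        simp [hBadF, Finset.mem_product]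
      rw [this, Finset.card_product, Finset.card_univ]
      simp [Fintype.card_fun]
    have hprod2 : (Finset.univ.filter (fun fg : (Fin m → Fin k) × (Fin m → Fin k) =>
          7*k ≤ 16 * emptyCount fg.2)).card = BadF.card * k^m := by
      have : (Finset.univ.filter (fun fg : (Fin m → Fin k) × (Fin m → Fin k) =>
            7*k ≤ 16 * emptyCount fg.2)) = Finset.univ ×ˢ BadF := by
        ext fg
        simp [hBadF, Finset.mem_product]
      rw [this, Finset.card_product, Finset.card_univ]
      simp [Fintype.card_fun, mul_comm]
    have hcount : (Finset.univ.filter (fun fg : (Fin m → Fin k) × (Fin m → Fin k) =>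
          (activeBins fg : ℝ) < k / 8)).card ≤ 2 * (BadF.card * k^m) := by
      calc _ ≤ _ := Finset.card_le_card hsub
        _ ≤ _ + _ := Finset.card_union_le _ _
        _ = 2 * (BadF.card * k^m) := by rw [hprod1, hprod2]; ring
    have htail := tail_bound m k hk hkm
    have hcardP : (Fintype.card ((Fin m → Fin k) × (Fin m → Fin k)) : ℝ) = (k:ℝ)^m * (k:ℝ)^m := by
      simp [Fintype.card_prod, Fintype.card_fun]
    calc ((Finset.univ.filter (fun fg : (Fin m → Fin k) × (Fin m → Fin k) =>
            (activeBins fg : ℝ) < k / 8)).card : ℝ)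
        ≤ 2 * ((BadF.card : ℝ) * (k:ℝ)^m) := by exact_mod_cast hcount
      _ ≤ 2 * (((k:ℝ)^m * Real.exp (-(1/200) * k)) * (k:ℝ)^m) := by
          apply mul_le_mul_of_nonneg_left _ (by norm_num)
          apply mul_le_mul_of_nonneg_right htail (by positivity)
      _ = 2 * Real.exp (-(1/200) * k) * ((k:ℝ)^m * (k:ℝ)^m) := by ring
      _ = 2 * Real.exp (-(1/200) * k) * (Fintype.card ((Fin m → Fin k) × (Fin m → Fin k)) : ℝ) := by
          rw [hcardP]
  refine ⟨by exact_mod_cast main1, ?_⟩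
  -- second event is contained in the first
  have hsub3 : (Finset.univ.filter (fun fg : (Fin m → Fin k) × (Fin m → Fin k) =>
        k < m - activeBins fg)) ⊆
      (Finset.univ.filter (fun fg : (Fin m → Fin k) × (Fin m → Fin k) =>
        (activeBins fg : ℝ) < k / 8)) := by
    intro fg hfg
    rw [Finset.mem_filter] at hfg ⊢
    refine ⟨Finset.mem_univ fg, ?_⟩
    have hXk : activeBins fg ≤ k := by
      calc activeBins fg ≤ (Finset.univ : Finset (Fin k)).card := Finset.card_filter_le _ _
        _ = k := by simp
    have h1 : activeBins fg + k < m := by omega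
    have h2 : ((activeBins fg + k : ℕ) : ℝ) < (m:ℝ) := by exact_mod_cast h1
    push_cast at h2
    nlinarith
  calc ((Finset.univ.filter (fun fg : (Fin m → Fin k) × (Fin m → Fin k) =>
          k < m - activeBins fg)).card : ℝ)
      ≤ ((Finset.univ.filter (fun fg : (Fin m → Fin k) × (Fin m → Fin k) =>
          (activeBins fg : ℝ) < k / 8)).card : ℝ) := by
        exact_mod_cast Finset.card_le_card hsub3
    _ ≤ _ := main1
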